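/- (Exact matching with a red matching reduces to 2S-RecovAP.) Let H be a bipartite graph with parts U and V, |U| = |V|, let R be a matching in H (not necessarily perfect), and let k ≥ 0. Let S_U ⊆ U and S_V ⊆ V be the sets of vertices not covered by R (so |S_U| = |S_V|), and fix a bijection φ : S_U → S_V. Define the graph H' by adding, for each v ∈ S_U ∪ S_V, a new vertex v' together with the edge {v, v'}, and adding, for each u ∈ S_U, the edge {u', (φ(u))'}. Then M_1 := R ∪ { {v, v'} : v ∈ S_U ∪ S_V } is a perfect matching of H'. Define c_2 on the edges of H' by c_2(e) = 1 for e ∈ R, c_2(e) = k + 1 for e = {v, v'} with v ∈ S_U ∪ S_V, and c_2(e) = 0 for all other edges. Then H has a perfect matching with exactly k edges in R if and only if H' has a perfect matching M_2 with |M_1 ∩ M_2| ≥ k and c_2(M_2) = k. -/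

import Mathlib

open SimpleGraph
open scoped Classical

/-- The set of vertices not covered by the (red) edge set `R`. -/
def uncov {V : Type*} (R : Set (Sym2 V)) : Set V := {v | ∀ e ∈ R, v ∉ e}

/-- The vertex set of `H'`: the vertices of `H` together with one new vertex `v'` for every
vertex `v` not covered by `R`. -/
def PrimeVert {V : Type*} (R : Set (Sym2 V)) : Type _ := V ⊕ {v : V // v ∈ uncov R}

/-- Generating relation for the edges of `H'`: the edges of `H`, the pendant edges `{v, v'}`
for `v` not covered by `R`, and the edges `{u', (φ u)'}` for `u ∈ S_U` (i.e. `u` uncovered and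
`u ∈ U`). -/
def primeRel {V : Type*} (H : SimpleGraph V) (U : Finset V) (R : Set (Sym2 V)) (φ : V → V) :
    PrimeVert R → PrimeVert R → Prop
  | Sum.inl v, Sum.inl w => H.Adj v w
  | Sum.inl v, Sum.inr w => v = w.1
  | Sum.inr u, Sum.inr w => u.1 ∈ U ∧ φ u.1 = w.1
  | _, _ => False

/-- The graph `H'`. -/
def PrimeGraph {V : Type*} (H : SimpleGraph V) (U : Finset V) (R : Set (Sym2 V)) (φ : V → V) :
    SimpleGraph (PrimeVert R) :=
  SimpleGraph.fromRel (primeRel H U R φ)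

/-- The edge set `M₁ = R ∪ { {v, v'} : v uncovered by R }`, a perfect matching of `H'`. -/
def M1edges {V : Type*} (R : Set (Sym2 V)) : Set (Sym2 (PrimeVert R)) :=
  (Sym2.map Sum.inl '' R) ∪
    {s | ∃ v : {v : V // v ∈ uncov R}, s = s(Sum.inl v.1, Sum.inr v)}

/-- The second-stage cost function `c₂` on the edges of `H'`: cost `1` on the edges of `R`,
cost `k + 1` on the pendant edges `{v, v'}`, and cost `0` on all other edges. -/
noncomputable def c2 {V : Type*} (R : Set (Sym2 V)) (k : ℕ) : Sym2 (PrimeVert R) → ℝ :=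
  fun s =>
    if s ∈ Sym2.map Sum.inl '' R then 1
    else if ∃ v : {v : V // v ∈ uncov R}, s = s(Sum.inl v.1, Sum.inr v) then (k : ℝ) + 1
    else 0

section Aux

variable {V : Type*} {H : SimpleGraph V} {U : Finset V} {R : Set (Sym2 V)} {φ : V → V}

lemma adj_ll {v w : V} :
    (PrimeGraph H U R φ).Adj (Sum.inl v) (Sum.inl w) ↔ H.Adj v w := by
  refine Iff.trans (fromRel_adj _ _ _) ?_
  constructor
  · rintro ⟨hne, h | h⟩
    · exact h
    · exact h.symm
  · intro h
    exact ⟨fun hc => h.ne (Sum.inl_injective hc), Or.inl h⟩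

lemma adj_lr {v : V} {u : {v : V // v ∈ uncov R}} :
    (PrimeGraph H U R φ).Adj (Sum.inl v) (Sum.inr u) ↔ v = u.1 := by
  refine Iff.trans (fromRel_adj _ _ _) ?_
  constructor
  · rintro ⟨hne, h | h⟩
    · exact h
    · exact h.elim
  · intro h
    exact ⟨Sum.inl_ne_inr, Or.inl h⟩

lemma adj_rr {u w : {v : V // v ∈ uncov R}} :
    (PrimeGraph H U R φ).Adj (Sum.inr u) (Sum.inr w) ↔
      u ≠ w ∧ ((u.1 ∈ U ∧ φ u.1 = w.1) ∨ (w.1 ∈ U ∧ φ w.1 = u.1)) := by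
  refine Iff.trans (fromRel_adj _ _ _) ?_
  constructor
  · rintro ⟨hne, h⟩
    exact ⟨fun hc => hne (by rw [hc]), h⟩
  · rintro ⟨hne, h⟩
    exact ⟨fun hc => hne (Sum.inr_injective hc), h⟩

lemma mem_inl_image {a b : PrimeVert R} :
    s(a,b) ∈ Sym2.map Sum.inl '' R ↔
      ∃ v w : V, a = Sum.inl v ∧ b = Sum.inl w ∧ s(v,w) ∈ R := by
  constructor
  · rintro ⟨e, he, heq⟩
    induction e using Sym2.ind with
    | _ x y =>
      have heq := Sym2.eq_iff.mp ((Sym2.map_pair_eq Sum.inl x y).symm.trans heq)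
      rcases heq with ⟨hx, hy⟩ | ⟨hx, hy⟩
      · exact ⟨x, y, hx.symm, hy.symm, he⟩
      · exact ⟨y, x, hy.symm, hx.symm, Sym2.eq_swap ▸ he⟩
  · rintro ⟨v, w, rfl, rfl, h⟩
    exact ⟨s(v,w), h, Sym2.map_pair_eq _ _ _⟩

lemma c2_nonneg (k : ℕ) (e : Sym2 (PrimeVert R)) : 0 ≤ c2 R k e := by
  unfold c2
  split_ifs <;> positivity

lemma finsum_ite_ncard {α : Type*} {S T : Set α} (hS : S.Finite) (hT : T ⊆ S) :
    ∑ᶠ e ∈ S, (if e ∈ T then (1:ℝ) else 0) = T.ncard := by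
  have hTf : T.Finite := hS.subset hT
  have hU : S = T ∪ (S \ T) := (Set.union_diff_cancel hT).symm
  rw [hU, finsum_mem_union Set.disjoint_sdiff_right hTf hS.diff]
  have h1 : ∑ᶠ e ∈ T, (if e ∈ T then (1:ℝ) else 0) = ∑ᶠ e ∈ T, (1:ℝ) :=
    finsum_mem_congr rfl (fun x hx => by simp [hx])
  have h2 : ∑ᶠ e ∈ (S \ T), (if e ∈ T then (1:ℝ) else 0) = ∑ᶠ e ∈ (S \ T), (0:ℝ) :=
    finsum_mem_congr rfl (fun x hx => by simp [hx.2])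
  rw [h1, h2, finsum_mem_zero, add_zero]
  rw [← Set.Finite.coe_toFinset hTf, finsum_mem_coe_finset]
  rw [Finset.sum_const, nsmul_eq_mul, mul_one, Set.ncard_coe_finset]

lemma sum_c2 [Finite V] (k : ℕ) (M₂ : (PrimeGraph H U R φ).Subgraph)
    (hp : ∀ u : {v : V // v ∈ uncov R}, s(Sum.inl u.1, Sum.inr u) ∉ M₂.edgeSet) :
    ∑ᶠ e ∈ M₂.edgeSet, c2 R k e = ((Sym2.map Sum.inl '' R ∩ M₂.edgeSet).ncard : ℝ) := by
  have hfinV : Finite (PrimeVert R) := by unfold PrimeVert; infer_instance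
  have hS : M₂.edgeSet.Finite := Set.toFinite _
  set T := Sym2.map Sum.inl '' R ∩ M₂.edgeSet with hTdef
  have hT : T ⊆ M₂.edgeSet := Set.inter_subset_right
  refine Eq.trans ?_ (finsum_ite_ncard hS hT)
  apply finsum_mem_congr rfl
  intro e he
  unfold c2
  by_cases h1 : e ∈ Sym2.map Sum.inl '' R
  · have : e ∈ T := ⟨h1, he⟩
    simp [h1, this]; exact this
  · have h2 : ¬ ∃ v : {v : V // v ∈ uncov R}, e = s(Sum.inl v.1, Sum.inr v) := by
      rintro ⟨u, rfl⟩; exact hp u he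
    have hnT : e ∉ T := fun hc => h1 hc.1
    simp [h1, h2, hnT]; exact hnT

lemma inter_image_eq (M₂ : (PrimeGraph H U R φ).Subgraph) (M : H.Subgraph)
    (hMM : ∀ v w : V, M₂.Adj (Sum.inl v) (Sum.inl w) ↔ M.Adj v w) :
    Sym2.map Sum.inl '' R ∩ M₂.edgeSet = Sym2.map Sum.inl '' (M.edgeSet ∩ R) := by
  ext e
  constructor
  · rintro ⟨h1, h2⟩
    induction e using Sym2.ind with
    | _ a b =>
      obtain ⟨v, w, rfl, rfl, hvw⟩ := mem_inl_image.mp h1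
      have hvw' : M.Adj v w := (hMM v w).mp (Subgraph.mem_edgeSet.mp h2)
      exact ⟨s(v,w), ⟨Subgraph.mem_edgeSet.mpr hvw', hvw⟩, Sym2.map_pair_eq _ _ _⟩
  · rintro ⟨f, ⟨hfM, hfR⟩, rfl⟩
    refine ⟨⟨f, hfR, rfl⟩, ?_⟩
    induction f using Sym2.ind with
    | _ v w =>
      rw [Sym2.map_pair_eq]
      exact Subgraph.mem_edgeSet.mpr ((hMM v w).mpr (Subgraph.mem_edgeSet.mp hfM))

lemma M1_inter (M₂ : (PrimeGraph H U R φ).Subgraph)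
    (hp : ∀ u : {v : V // v ∈ uncov R}, s(Sum.inl u.1, Sum.inr u) ∉ M₂.edgeSet) :
    M1edges R ∩ M₂.edgeSet = Sym2.map Sum.inl '' R ∩ M₂.edgeSet := by
  ext e
  constructor
  · rintro ⟨h1 | h1, h2⟩
    · exact ⟨h1, h2⟩
    · obtain ⟨u, rfl⟩ := h1
      exact absurd h2 (hp u)
  · rintro ⟨h1, h2⟩
    exact ⟨Or.inl h1, h2⟩

end Aux

/-- The extension of a matching relation on `V` to `PrimeVert R`, matching the primed
vertices among themselves via `φ`. -/
def extAdj {V : Type*} (U : Finset V) (R : Set (Sym2 V)) (φ : V → V) (A : V → V → Prop) :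
    PrimeVert R → PrimeVert R → Prop
  | Sum.inl v, Sum.inl w => A v w
  | Sum.inr u, Sum.inr w => (u.1 ∈ U ∧ φ u.1 = w.1) ∨ (w.1 ∈ U ∧ φ w.1 = u.1)
  | _, _ => False

theorem exact_matching_reduces_to_2S_RecovAP {V : Type*} [Fintype V] [DecidableEq V]
    (H : SimpleGraph V) (U : Finset V)
    (hbip : ∀ ⦃a b : V⦄, H.Adj a b → (a ∈ U ↔ b ∉ U))
    (hcard : 2 * U.card = Fintype.card V)
    (R : Set (Sym2 V)) (hR : R ⊆ H.edgeSet)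
    (hmatch : ∀ e₁ ∈ R, ∀ e₂ ∈ R, e₁ ≠ e₂ → ∀ v : V, v ∈ e₁ → v ∉ e₂)
    (k : ℕ) (φ : V → V)
    (hφmaps : ∀ u, u ∈ uncov R → u ∈ U → φ u ∈ uncov R ∧ φ u ∉ U)
    (hφinj : Set.InjOn φ (uncov R ∩ ↑U))
    (hφsurj : ∀ w, w ∈ uncov R → w ∉ U → ∃ u, u ∈ uncov R ∧ u ∈ U ∧ φ u = w) :
    (∃ M₁ : (PrimeGraph H U R φ).Subgraph,
        M₁.edgeSet = M1edges R ∧ M₁.IsPerfectMatching) ∧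
    ((∃ M : H.Subgraph, M.IsPerfectMatching ∧ (M.edgeSet ∩ R).ncard = k) ↔
      (∃ M₂ : (PrimeGraph H U R φ).Subgraph, M₂.IsPerfectMatching ∧
        k ≤ (M1edges R ∩ M₂.edgeSet).ncard ∧
        ∑ᶠ e ∈ M₂.edgeSet, c2 R k e = (k : ℝ))) := by
  have hinj : Function.Injective (Sym2.map (Sum.inl : V → PrimeVert R)) :=
    Sym2.map.injective Sum.inl_injective
  constructor
  · -- M₁ is a perfect matching
    refine ⟨⟨Set.univ, fun a b => s(a,b) ∈ M1edges R, ?_, fun _ => Set.mem_univ _,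
        ⟨fun a b h => by show s(b,a) ∈ M1edges R; rw [Sym2.eq_swap]; exact h⟩⟩, ?_, ?_, fun v => Set.mem_univ v⟩
    · -- adj_sub
      rintro a b (h | h)
      · obtain ⟨v, w, rfl, rfl, hvw⟩ := mem_inl_image.mp h
        exact adj_ll.mpr (hR hvw)
      · obtain ⟨u, hu⟩ := h
        have hu := Sym2.eq_iff.mp hu
        rcases hu with ⟨rfl, rfl⟩ | ⟨rfl, rfl⟩
        · exact adj_lr.mpr rfl
        · exact (adj_lr.mpr rfl).symm
    · -- edgeSet = M1edges
      ext e
      induction e using Sym2.ind with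
      | _ a b => rw [Subgraph.mem_edgeSet]
    · -- matching
      rintro (v | u) -
      · by_cases hv : v ∈ uncov R
        · refine ⟨Sum.inr ⟨v, hv⟩, Or.inr ⟨⟨v, hv⟩, rfl⟩, ?_⟩
          rintro b (h | h)
          · obtain ⟨v', w', hv', rfl, hvw⟩ := mem_inl_image.mp h
            exact absurd (Sym2.mem_mk_left _ _) (hv _ ((Sum.inl_injective hv') ▸ hvw))
          · obtain ⟨u', hu'⟩ := h
            have hu' := Sym2.eq_iff.mp hu'
            rcases hu' with ⟨h1, h2⟩ | ⟨h1, h2⟩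
            · rw [h2]
              exact congrArg Sum.inr (Subtype.ext (Sum.inl_injective h1).symm)
            · exact absurd h1 (by simp)
        · rw [uncov, Set.mem_setOf_eq] at hv
          push_neg at hv
          obtain ⟨e, he, hve⟩ := hv
          obtain ⟨w, rfl⟩ := Sym2.mem_iff_exists.mp hve
          refine ⟨Sum.inl w, Or.inl ⟨s(v,w), he, Sym2.map_pair_eq _ _ _⟩, ?_⟩
          rintro b (h | h)
          · obtain ⟨v', w', hv', rfl, hvw⟩ := mem_inl_image.mp h
            have hv'' : s(v, w') ∈ R := (Sum.inl_injective hv') ▸ hvw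
            have : s(v, w') = s(v, w) := by
              by_contra hne
              exact hmatch _ hv'' _ he hne v (Sym2.mem_mk_left _ _) (Sym2.mem_mk_left _ _)
            rw [Sym2.eq_iff] at this
            rcases this with ⟨-, rfl⟩ | ⟨h1, h2⟩
            · rfl
            · rw [h2, ← h1]
          · obtain ⟨u', hu'⟩ := h
            have hu' := Sym2.eq_iff.mp hu'
            rcases hu' with ⟨h1, h2⟩ | ⟨h1, h2⟩
            · exact absurd (u'.2 _ he) (fun hc => hc ((Sum.inl_injective h1) ▸
                Sym2.mem_mk_left v w))
            · exact absurd h1 (by simp)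
      · refine ⟨Sum.inl u.1, Or.inr ⟨u, Sym2.eq_swap⟩, ?_⟩
        rintro b (h | h)
        · obtain ⟨v', w', hv', rfl, hvw⟩ := mem_inl_image.mp h
          exact absurd hv' (by simp)
        · obtain ⟨u', hu'⟩ := h
          have hu' := Sym2.eq_iff.mp hu'
          rcases hu' with ⟨h1, h2⟩ | ⟨h1, h2⟩
          · exact absurd h1 (by simp)
          · rw [h2, Sum.inr_injective h1]
  · constructor
    · -- forward direction
      rintro ⟨M, hM, hMcard⟩
      have hadjsub : ∀ a b, extAdj U R φ M.Adj a b → (PrimeGraph H U R φ).Adj a b := by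
        rintro (v | u) (w | w') h
        · exact adj_ll.mpr (M.adj_sub h)
        · exact h.elim
        · exact h.elim
        · refine adj_rr.mpr ⟨?_, h⟩
          rintro rfl
          rcases h with ⟨hU, hphi⟩ | ⟨hU, hphi⟩ <;>
            exact (hφmaps u.1 u.2 hU).2 (by rw [hphi]; exact hU)
      have hsymm : Symmetric (extAdj U R φ M.Adj) := by
        rintro (v | u) (w | w') h
        · exact M.adj_symm h
        · exact h.elim
        · exact h.elim
        · exact h.symm
      set M₂ : (PrimeGraph H U R φ).Subgraph :=
        ⟨Set.univ, extAdj U R φ M.Adj, fun {a b} h => hadjsub a b h,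
          fun {a b} _ => Set.mem_univ _, ⟨fun _ _ h => hsymm h⟩⟩ with hM₂def
      have hmatching : M₂.IsMatching := by
        rintro (v | u) -
        · obtain ⟨w, hw, huniq⟩ := hM.1 (hM.2 v)
          refine ⟨Sum.inl w, hw, ?_⟩
          rintro (w' | u') h
          · exact congrArg Sum.inl (huniq w' h)
          · exact h.elim
        · by_cases hU : u.1 ∈ U
          · refine ⟨Sum.inr ⟨φ u.1, (hφmaps u.1 u.2 hU).1⟩, Or.inl ⟨hU, rfl⟩, ?_⟩
            rintro (v' | w') h
            · exact h.elim
            · rcases h with ⟨-, he⟩ | ⟨hw', he'⟩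
              · exact congrArg Sum.inr (Subtype.ext he.symm)
              · exact absurd hU (he' ▸ (hφmaps w'.1 w'.2 hw').2)
          · obtain ⟨x, hx1, hx2, hx3⟩ := hφsurj u.1 u.2 hU
            refine ⟨Sum.inr ⟨x, hx1⟩, Or.inr ⟨hx2, hx3⟩, ?_⟩
            rintro (v' | w') h
            · exact h.elim
            · rcases h with ⟨hu, -⟩ | ⟨hw', he'⟩
              · exact absurd hu hU
              · have hwx : w'.1 = x := hφinj ⟨w'.2, hw'⟩ ⟨hx1, hx2⟩ (by rw [he', hx3])
                exact congrArg Sum.inr (Subtype.ext hwx)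
      have hp : ∀ u : {v : V // v ∈ uncov R},
          s(Sum.inl u.1, Sum.inr u) ∉ M₂.edgeSet := by
        intro u h
        exact (Subgraph.mem_edgeSet.mp h : False)
      have hMM : ∀ v w : V, M₂.Adj (Sum.inl v) (Sum.inl w) ↔ M.Adj v w :=
        fun v w => Iff.rfl
      have hncard : (Sym2.map Sum.inl '' R ∩ M₂.edgeSet).ncard = k := by
        rw [inter_image_eq M₂ M hMM, Set.ncard_image_of_injective _ hinj, hMcard]
      refine ⟨M₂, ⟨hmatching, fun v => Set.mem_univ v⟩, ?_, ?_⟩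
      · rw [M1_inter M₂ hp]; exact hncard.symm.le
      · rw [sum_c2 k M₂ hp, hncard]
    · -- backward direction
      rintro ⟨M₂, hM₂, hge, hsum⟩
      have hfinV : Finite (PrimeVert R) := by unfold PrimeVert; infer_instance
      have hS : M₂.edgeSet.Finite := Set.toFinite _
      have hp : ∀ u : {v : V // v ∈ uncov R},
          s(Sum.inl u.1, Sum.inr u) ∉ M₂.edgeSet := by
        intro u hu
        have h1 : c2 R k s(Sum.inl u.1, Sum.inr u) = (k:ℝ) + 1 := by
          unfold c2
          rw [if_neg, if_pos ⟨u, rfl⟩]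
          intro h
          obtain ⟨v, w, -, hw, -⟩ := mem_inl_image.mp h
          exact absurd hw (by simp)
        have hle : (k:ℝ) + 1 ≤ ∑ᶠ e ∈ M₂.edgeSet, c2 R k e := by
          rw [← hS.coe_toFinset, finsum_mem_coe_finset]
          exact le_trans (le_of_eq h1.symm)
            (Finset.single_le_sum (fun e _ => c2_nonneg k e) (hS.mem_toFinset.mpr hu))
        rw [hsum] at hle
        linarith
      set M0 : H.Subgraph := ⟨Set.univ, fun v w => M₂.Adj (Sum.inl v) (Sum.inl w),
        fun {v w} h => adj_ll.mp (M₂.adj_sub h), fun {v w} _ => Set.mem_univ _,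
        ⟨fun v w h => M₂.adj_symm h⟩⟩ with hM0def
      refine ⟨M0, ⟨?_, fun v => Set.mem_univ v⟩, ?_⟩
      · -- matching
        rintro v -
        obtain ⟨b, hb, huniq⟩ := hM₂.1 (hM₂.2 (Sum.inl v))
        rcases b with w | u
        · exact ⟨w, hb, fun w' h' => Sum.inl_injective (huniq (Sum.inl w') h')⟩
        · exfalso
          have hv : v = u.1 := adj_lr.mp (M₂.adj_sub hb)
          exact hp u (hv ▸ Subgraph.mem_edgeSet.mpr hb)
      · -- cardinality
        rw [sum_c2 k M₂ hp] at hsum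
        have hcn : (Sym2.map Sum.inl '' R ∩ M₂.edgeSet).ncard = k := Nat.cast_injective hsum
        rw [inter_image_eq M₂ M0 (fun v w => Iff.rfl), Set.ncard_image_of_injective _ hinj]
          at hcn
        exact hcn
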